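/- Let n ≥ 2 and W ∈ ℝⁿ have at least one strictly positive and at least one strictly negative entry. Let S⁺ = { i : W_i > 0 }, which is then a proper mask (0 < |S⁺| < n). Then D(S⁺) ≥ (∑_{i=1}^n |W_i|)²/n. Consequently the minimal distribution-aware binarization error min_{α,β} ‖W − α·e_{S⁺} − β·(1−e_{S⁺})‖² is at most the minimal XNOR-style error min_{α∈ℝ, s∈{−1,+1}ⁿ} ‖W − α·s‖²; i.e., the two-parameter (α,β) binarization approximates W at least as well as the symmetric (α,−α) binarization. -/
import Mathlib

lemma sum_sq_sub_aux {n : ℕ} (s : Finset (Fin n)) (W : Fin n → ℝ) (c : ℝ) :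
    ∑ i ∈ s, (W i - c) ^ 2
      = (∑ i ∈ s, (W i) ^ 2) - 2 * c * (∑ i ∈ s, W i) + (s.card : ℝ) * c ^ 2 := by
  rw [Finset.mul_sum]
  rw [show (s.card : ℝ) * c ^ 2 = ∑ _i ∈ s, c ^ 2 by
    simp [Finset.sum_const, nsmul_eq_mul]]
  rw [← Finset.sum_sub_distrib, ← Finset.sum_add_distrib]
  exact Finset.sum_congr rfl fun i _ => by ring

lemma key2_aux (a t T N : ℝ) (hN : 0 < N) (hT : |t| ≤ T) :
    2 * a * t - a ^ 2 * N ≤ T ^ 2 / N := by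
  rw [le_div_iff₀ hN]
  have ht2 : t ^ 2 ≤ T ^ 2 := by
    rw [← sq_abs t]
    nlinarith [abs_nonneg t]
  nlinarith [sq_nonneg (a * N - t)]

theorem dabnet_beats_xnor (n : ℕ) (hn : 2 ≤ n) (W : Fin n → ℝ)
    (hpos : ∃ i, 0 < W i) (hneg : ∃ i, W i < 0)
    (Splus : Finset (Fin n))
    (hSplus : Splus = Finset.univ.filter (fun i => 0 < W i)) :
    (0 < Splus.card ∧ Splus.card < n)
    ∧ (∑ i, |W i|) ^ 2 / (n : ℝ)
        ≤ (∑ i ∈ Splus, W i) ^ 2 / (Splus.card : ℝ)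
          + (∑ i ∈ Splusᶜ, W i) ^ 2 / ((n : ℝ) - (Splus.card : ℝ))
    ∧ sInf {x : ℝ | ∃ α β : ℝ,
          x = ∑ i, (W i - (if i ∈ Splus then α else β)) ^ 2}
        ≤ sInf {x : ℝ | ∃ (α : ℝ) (s : Fin n → ℝ),
            (∀ i, s i = 1 ∨ s i = -1) ∧ x = ∑ i, (W i - α * s i) ^ 2} := by
  obtain ⟨ip, hip⟩ := hpos
  obtain ⟨iq, hiq⟩ := hneg
  have hipS : ip ∈ Splus := by simp [hSplus, hip]
  have hiqS : iq ∉ Splus := by simp [hSplus]; linarith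
  have hkpos : 0 < Splus.card := Finset.card_pos.2 ⟨ip, hipS⟩
  have hklt : Splus.card < n := by
    have hne : Splus ⊂ Finset.univ := Finset.ssubset_univ_iff.2 (by
      intro h; exact hiqS (h ▸ Finset.mem_univ iq))
    simpa using Finset.card_lt_card hne
  set A := ∑ i ∈ Splus, W i with hA
  set B := ∑ i ∈ Splusᶜ, W i with hB
  set kr : ℝ := (Splus.card : ℝ) with hkr
  have hkr0 : 0 < kr := by rw [hkr]; exact_mod_cast hkpos
  have hmr0 : 0 < (n : ℝ) - kr := by
    have : (Splus.card : ℝ) < n := by exact_mod_cast hklt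
    linarith
  have hn0 : (0 : ℝ) < n := by positivity
  have hT : ∑ i, |W i| = A - B := by
    rw [← Finset.sum_add_sum_compl Splus fun i => |W i|]
    have h1 : ∑ i ∈ Splus, |W i| = A := Finset.sum_congr rfl fun i hi => by
      have : 0 < W i := by simpa [hSplus] using hi
      exact abs_of_pos this
    have h2 : ∑ i ∈ Splusᶜ, |W i| = -B := by
      rw [hB, ← Finset.sum_neg_distrib]
      exact Finset.sum_congr rfl fun i hi => by
        have : ¬ 0 < W i := by simpa [hSplus] using (Finset.mem_compl.1 hi)
        exact abs_of_nonpos (le_of_not_gt this)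
    rw [h1, h2]; ring
  have key : (A - B) ^ 2 / (n : ℝ) ≤ A ^ 2 / kr + B ^ 2 / ((n : ℝ) - kr) := by
    rw [div_add_div _ _ (ne_of_gt hkr0) (ne_of_gt hmr0), div_le_div_iff₀ hn0 (by positivity)]
    nlinarith [sq_nonneg (A * ((n : ℝ) - kr) + B * kr), mul_pos hkr0 hmr0]
  refine ⟨⟨hkpos, hklt⟩, by rw [hT]; exact key, ?_⟩
  -- third part
  have hSq : ∑ i, (W i) ^ 2 = ∑ i ∈ Splus, (W i) ^ 2 + ∑ i ∈ Splusᶜ, (W i) ^ 2 :=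
    (Finset.sum_add_sum_compl Splus fun i => (W i) ^ 2).symm
  have he : ∑ i, (W i - (if i ∈ Splus then A / kr else B / ((n : ℝ) - kr))) ^ 2
      = (∑ i, (W i) ^ 2) - (A ^ 2 / kr + B ^ 2 / ((n : ℝ) - kr)) := by
    rw [← Finset.sum_add_sum_compl Splus]
    have h1 : ∑ i ∈ Splus, (W i - (if i ∈ Splus then A / kr else B / ((n : ℝ) - kr))) ^ 2
        = ∑ i ∈ Splus, (W i - A / kr) ^ 2 :=
      Finset.sum_congr rfl fun i hi => by rw [if_pos hi]
    have h2 : ∑ i ∈ Splusᶜ, (W i - (if i ∈ Splus then A / kr else B / ((n : ℝ) - kr))) ^ 2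
        = ∑ i ∈ Splusᶜ, (W i - B / ((n : ℝ) - kr)) ^ 2 :=
      Finset.sum_congr rfl fun i hi => by rw [if_neg (Finset.mem_compl.1 hi)]
    rw [h1, h2, sum_sq_sub_aux, sum_sq_sub_aux, hSq, ← hA, ← hB, ← hkr]
    have hcard : ((Splusᶜ).card : ℝ) = (n : ℝ) - kr := by
      rw [Finset.card_compl]
      have : Splus.card ≤ Fintype.card (Fin n) := Finset.card_le_univ _
      push_cast [Nat.cast_sub this]
      simp [hkr]
    rw [hcard]
    field_simp
    ring
  have hne2 : Set.Nonempty {x : ℝ | ∃ (α : ℝ) (s : Fin n → ℝ),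
      (∀ i, s i = 1 ∨ s i = -1) ∧ x = ∑ i, (W i - α * s i) ^ 2} :=
    ⟨∑ i, (W i - 1 * 1) ^ 2, 1, fun _ => 1, fun i => Or.inl rfl, rfl⟩
  apply le_csInf hne2
  rintro x ⟨α, s, hs, rfl⟩
  have hbdd : BddBelow {x : ℝ | ∃ α β : ℝ,
      x = ∑ i, (W i - (if i ∈ Splus then α else β)) ^ 2} := by
    refine ⟨0, ?_⟩
    rintro y ⟨a, b, rfl⟩
    exact Finset.sum_nonneg fun i _ => sq_nonneg _
  refine le_trans (csInf_le hbdd ⟨A / kr, B / ((n : ℝ) - kr), rfl⟩) ?_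
  rw [he]
  set t := ∑ i, W i * s i with htdef
  have hx : ∑ i, (W i - α * s i) ^ 2
      = (∑ i, (W i) ^ 2) - 2 * α * t + α ^ 2 * n := by
    have : ∀ i : Fin n, (W i - α * s i) ^ 2
        = (W i) ^ 2 - 2 * α * (W i * s i) + α ^ 2 * 1 := by
      intro i
      have hs2 : (s i) ^ 2 = 1 := by rcases hs i with h | h <;> rw [h] <;> norm_num
      nlinarith [hs2]
    rw [Finset.sum_congr rfl fun i _ => this i]
    simp only [Finset.sum_add_distrib, Finset.sum_sub_distrib, ← Finset.mul_sum,
      Finset.sum_const, Finset.card_univ, Fintype.card_fin, nsmul_eq_mul]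
    ring
  rw [hx]
  have ht : |t| ≤ A - B := by
    rw [← hT]
    calc |t| ≤ ∑ i, |W i * s i| := Finset.abs_sum_le_sum_abs _ _
      _ = ∑ i, |W i| := Finset.sum_congr rfl fun i _ => by
          rcases hs i with h | h <;> rw [h] <;> simp
  clear_value t A B kr
  have hT0 : 0 ≤ A - B := le_trans (abs_nonneg t) ht
  have htt : t ^ 2 ≤ (A - B) ^ 2 := by
    rw [← sq_abs t]; exact pow_le_pow_left₀ (abs_nonneg t) ht 2
  have key2 : 2 * α * t - α ^ 2 * n ≤ (A - B) ^ 2 / n := key2_aux α t (A - B) n hn0 ht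
  linarith [le_trans key2 key]
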